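/- Let G be a graph and L an m-assignment for G. Suppose uv ∈ E(G), |L(u) − L(v)| = d ≥ 1, and for every x ∈ L(u) and y ∈ L(v) with x ≠ y there are at least C proper L-colorings of G that color u with x and v with y. Then P(G,L) ≥ P_DP(G,m) + C·d. -/

import Mathlib

open SimpleGraph Finset

/-- A proper `L`-coloring of `G`: each vertex gets a color from its list and adjacent
vertices get different colors. -/
def ProperLColoring {V : Type*} (G : SimpleGraph V) (L : V → Finset ℕ) (f : V → ℕ) : Prop :=
  (∀ v, f v ∈ L v) ∧ ∀ ⦃u w⦄, G.Adj u w → f u ≠ f w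

/-- `P(G,L)`: the number of proper `L`-colorings of `G`. -/
noncomputable def PList {V : Type*} (G : SimpleGraph V) (L : V → Finset ℕ) : ℕ :=
  Nat.card {f : V → ℕ // ProperLColoring G L f}

/-- `P(G,m)`: the number of proper colorings of `G` with colors from `{1, …, m}`. -/
noncomputable def PChrom {V : Type*} (G : SimpleGraph V) (m : ℕ) : ℕ :=
  PList G (fun _ => Finset.Icc 1 m)

/-- The list color function `P_ℓ(G,m)`: the minimum of `P(G,L)` over all `m`-assignments. -/
noncomputable def PListFn {V : Type*} (G : SimpleGraph V) (m : ℕ) : ℕ :=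
  sInf {n | ∃ L : V → Finset ℕ, (∀ v, (L v).card = m) ∧ n = PList G L}

/-- `G` is enumeratively chromatic-choosable: `P_ℓ(G,m) = P(G,m)` for all `m ∈ ℕ = {1,2,…}`. -/
def EnumChromChoosable {V : Type*} (G : SimpleGraph V) : Prop :=
  ∀ m : ℕ, 1 ≤ m → PListFn G m = PChrom G m

/-- Vertices of the theta graph `Θ(l1,l2,l3)`: the end vertices `u = Sum.inl false` and
`v = Sum.inl true`, together with the `lᵢ - 1` internal vertices of the `i`-th path. -/
abbrev ThetaVert (l1 l2 l3 : ℕ) : Type :=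
  Bool ⊕ (Σ i : Fin 3, Fin (![l1, l2, l3] i - 1))

/-- Edges of the theta graph (up to symmetrization): the internal vertices of the `i`-th path,
in order, form a path from `u` to `v`; if some path has length 1 then `u` and `v` are adjacent. -/
def thetaRel (l1 l2 l3 : ℕ) : ThetaVert l1 l2 l3 → ThetaVert l1 l2 l3 → Prop :=
  fun a b =>
    match a, b with
    | Sum.inl false, Sum.inl true => l1 = 1 ∨ l2 = 1 ∨ l3 = 1
    | Sum.inl false, Sum.inr ⟨_, j⟩ => (j : ℕ) = 0
    | Sum.inr ⟨i, j⟩, Sum.inl true => (j : ℕ) + 2 = ![l1, l2, l3] i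
    | Sum.inr ⟨i, j⟩, Sum.inr ⟨i', j'⟩ => i = i' ∧ (j : ℕ) + 1 = (j' : ℕ)
    | _, _ => False

/-- The theta graph `Θ(l1,l2,l3)`: two end vertices joined by three internally disjoint
paths of lengths `l1`, `l2`, `l3`. -/
def thetaGraph (l1 l2 l3 : ℕ) : SimpleGraph (ThetaVert l1 l2 l3) :=
  SimpleGraph.fromRel (thetaRel l1 l2 l3)

/-- A DP-cover `(L, H)` of `G`. -/
structure DPCover {V : Type*} (G : SimpleGraph V) (W : Type*) where
  H : SimpleGraph W
  L : V → Set W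
  partition : ∀ w : W, ∃! v : V, w ∈ L v
  matching : ∀ ⦃u v : V⦄, G.Adj u v → ∀ ⦃x y y' : W⦄, x ∈ L u → y ∈ L v → y' ∈ L v →
      H.Adj x y → H.Adj x y' → y = y'
  cross : ∀ ⦃x y : W⦄, H.Adj x y → ∃ u v, G.Adj u v ∧ x ∈ L u ∧ y ∈ L v

/-- A proper `H`-coloring: an independent transversal of the cover. -/
def DPCover.IsProperColoring {V W : Type*} {G : SimpleGraph V} (C : DPCover G W)
    (T : Set W) : Prop :=
  (∀ v : V, ∃! w : W, w ∈ T ∧ w ∈ C.L v) ∧ ∀ ⦃x y⦄, x ∈ T → y ∈ T → ¬ C.H.Adj x y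

/-- `P_DP(G, H)`: the number of proper `H`-colorings of `G`. -/
noncomputable def PDPCount {V W : Type*} {G : SimpleGraph V} (C : DPCover G W) : ℕ :=
  Nat.card {T : Set W // C.IsProperColoring T}

/-- The DP color function `P_DP(G,m)`: the minimum of `P_DP(G,H)` over all `m`-fold covers. -/
noncomputable def PDP {V : Type*} (G : SimpleGraph V) (m : ℕ) : ℕ :=
  sInf {n | ∃ (W : Type) (C : DPCover G W), (∀ v, Nat.card ↥(C.L v) = m) ∧ n = PDPCount C}

/-- A cover is full if the matching between the lists of adjacent vertices is perfect. -/
def DPCover.IsFull {V W : Type*} {G : SimpleGraph V} (C : DPCover G W) : Prop :=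
  ∀ ⦃u v : V⦄, G.Adj u v → ∀ x ∈ C.L u, ∃! y, y ∈ C.L v ∧ C.H.Adj x y
section TwistAux
variable {V : Type*} [Fintype V]

def TwistAdj (u v : V) (τ : ℕ → ℕ) (a b : V) (c c' : ℕ) : Prop :=
  (a = u ∧ b = v ∧ c' = τ c) ∨ (a = v ∧ b = u ∧ c = τ c') ∨
    (¬(a = u ∧ b = v) ∧ ¬(a = v ∧ b = u) ∧ c = c')

lemma TwistAdj.symm {u v : V} {τ : ℕ → ℕ} {a b : V} {c c' : ℕ}
    (h : TwistAdj u v τ b a c' c) : TwistAdj u v τ a b c c' := by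
  rcases h with ⟨h1, h2, h3⟩ | ⟨h1, h2, h3⟩ | ⟨h1, h2, h3⟩
  · exact Or.inr (Or.inl ⟨h2, h1, h3⟩)
  · exact Or.inl ⟨h2, h1, h3⟩
  · exact Or.inr (Or.inr ⟨fun ⟨x, y⟩ => h2 ⟨y, x⟩, fun ⟨x, y⟩ => h1 ⟨y, x⟩, h3.symm⟩)

noncomputable def TW (L : V → Finset ℕ) : Type :=
  {p : Fin (Fintype.card V) × ℕ // p.2 ∈ L ((Fintype.equivFin V).symm p.1)}

noncomputable def twistCover (G : SimpleGraph V) (L : V → Finset ℕ) (u v : V) (τ : ℕ → ℕ)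
    (huv : u ≠ v) (hτinj : Set.InjOn τ (L u : Set ℕ)) : DPCover G (TW L) where
  H := SimpleGraph.fromRel fun p q => ∃ a b, G.Adj a b ∧ p.1.1 = Fintype.equivFin V a ∧
        q.1.1 = Fintype.equivFin V b ∧ TwistAdj u v τ a b p.1.2 q.1.2
  L := fun a => {w : TW L | w.1.1 = Fintype.equivFin V a}
  partition := fun w => by
    refine ⟨(Fintype.equivFin V).symm w.1.1, by simp [Set.mem_setOf_eq], fun a ha => ?_⟩
    have := congrArg (Fintype.equivFin V).symm ha
    simpa using this.symm
  matching := by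
    intro a b hab x y y' hx hy hy' hxy hxy'
    have hne : a ≠ b := hab.ne
    -- extract twist relations
    have getTw : ∀ z : TW L, z ∈ {w : TW L | w.1.1 = Fintype.equivFin V b} →
        (SimpleGraph.fromRel fun p q : TW L => ∃ a' b', G.Adj a' b' ∧
          p.1.1 = Fintype.equivFin V a' ∧ q.1.1 = Fintype.equivFin V b' ∧
          TwistAdj u v τ a' b' p.1.2 q.1.2).Adj x z →
        TwistAdj u v τ a b x.1.2 z.1.2 := by
      intro z hz hadj
      rw [SimpleGraph.fromRel_adj] at hadj
      rcases hadj.2 with ⟨a', b', _, hx', hz', htw⟩ | ⟨a', b', _, hz', hx', htw⟩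
      · have ha' : a' = a := (Fintype.equivFin V).injective (hx'.symm.trans hx)
        have hb' : b' = b := (Fintype.equivFin V).injective (hz'.symm.trans hz)
        rwa [ha', hb'] at htw
      · have ha' : b' = a := (Fintype.equivFin V).injective (hx'.symm.trans hx)
        have hb' : a' = b := (Fintype.equivFin V).injective (hz'.symm.trans hz)
        rw [ha', hb'] at htw
        exact htw.symm
    have t1 : TwistAdj u v τ a b x.1.2 y.1.2 := getTw y hy hxy
    have t2 : TwistAdj u v τ a b x.1.2 y'.1.2 := getTw y' hy' hxy'
    have hval : y.1.2 = y'.1.2 := by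
      have hLmem : ∀ z : TW L, z ∈ {w : TW L | w.1.1 = Fintype.equivFin V u} →
          z.1.2 ∈ (L u : Set ℕ) := by
        intro z hz
        have h5 := z.2
        rw [Set.mem_setOf_eq] at hz
        rw [hz] at h5
        simpa using h5
      rcases t1 with ⟨h1, h2, h3⟩ | ⟨h1, h2, h3⟩ | ⟨h1, h2, h3⟩ <;>
        rcases t2 with ⟨k1, k2, k3⟩ | ⟨k1, k2, k3⟩ | ⟨k1, k2, k3⟩
      · exact h3.trans k3.symm
      · exact absurd (h1.symm.trans k1) huv
      · exact absurd ⟨h1, h2⟩ k1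
      · exact absurd (k1.symm.trans h1) huv
      · subst h2
        exact hτinj (hLmem y hy) (hLmem y' hy') (h3.symm.trans k3)
      · exact absurd ⟨h1, h2⟩ k2
      · exact absurd ⟨k1, k2⟩ h1
      · exact absurd ⟨k1, k2⟩ h2
      · exact h3.symm.trans k3
    have hfst : y.1.1 = y'.1.1 := hy.trans hy'.symm
    exact Subtype.ext (Prod.ext hfst hval)
  cross := by
    intro x y hadj
    rw [SimpleGraph.fromRel_adj] at hadj
    rcases hadj.2 with ⟨a, b, hab, hx, hy, _⟩ | ⟨a, b, hab, hy, hx, _⟩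
    · exact ⟨a, b, hab, hx, hy⟩
    · exact ⟨b, a, hab.symm, hx, hy⟩

lemma finite_aux (L : V → Finset ℕ) (p : (V → ℕ) → Prop) (hp : ∀ f, p f → ∀ a, f a ∈ L a) :
    Finite {f : V → ℕ // p f} := by
  have hinj : Function.Injective (fun (f : {f : V → ℕ // p f}) (a : V) =>
      (⟨f.1 a, hp _ f.2 a⟩ : {c // c ∈ L a})) := by
    intro f g h
    apply Subtype.ext; funext a
    exact congrArg Subtype.val (congrFun h a)
  exact Finite.of_injective _ hinj

def DPproper (G : SimpleGraph V) (L : V → Finset ℕ) (u v : V) (τ : ℕ → ℕ) (g : V → ℕ) : Prop :=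
  (∀ a, g a ∈ L a) ∧ ∀ ⦃a b⦄, G.Adj a b → ¬ TwistAdj u v τ a b (g a) (g b)

/-- lists of the twist cover have the right size -/
noncomputable def twistListEquiv (G : SimpleGraph V) (L : V → Finset ℕ) (u v : V) (τ : ℕ → ℕ)
    (huv : u ≠ v) (hτinj : Set.InjOn τ (L u : Set ℕ)) (a : V) :
    ((twistCover G L u v τ huv hτinj).L a) ≃ {c // c ∈ L a} where
  toFun w := ⟨w.1.1.2, by
    have h5 := w.1.2
    have h6 : w.1.1.1 = Fintype.equivFin V a := w.2
    rw [h6] at h5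
    simpa using h5⟩
  invFun c := ⟨⟨(Fintype.equivFin V a, c.1), by simpa using c.2⟩, rfl⟩
  left_inv w := by
    apply Subtype.ext
    apply Subtype.ext
    have h6 : w.1.1.1 = Fintype.equivFin V a := w.2
    exact Prod.ext h6.symm rfl
  right_inv c := rfl

/-- the bijection between DP-proper functions and proper colorings of the twist cover -/
lemma twist_bij (G : SimpleGraph V) (L : V → Finset ℕ) (u v : V) (τ : ℕ → ℕ)
    (huv : u ≠ v) (hτinj : Set.InjOn τ (L u : Set ℕ)) :
    Nat.card {g : V → ℕ // DPproper G L u v τ g} =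
      Nat.card {T : Set (TW L) // (twistCover G L u v τ huv hτinj).IsProperColoring T} := by
  set e := Fintype.equivFin V with he
  set Cov := twistCover G L u v τ huv hτinj with hCov
  have hmemL : ∀ (a : V) (w : TW L), w ∈ Cov.L a ↔ w.1.1 = e a := fun a w => Iff.rfl
  have hadjH : ∀ x y : TW L, Cov.H.Adj x y ↔ x ≠ y ∧
      ((∃ a b, G.Adj a b ∧ x.1.1 = e a ∧ y.1.1 = e b ∧ TwistAdj u v τ a b x.1.2 y.1.2) ∨
       (∃ a b, G.Adj a b ∧ y.1.1 = e a ∧ x.1.1 = e b ∧ TwistAdj u v τ a b y.1.2 x.1.2)) :=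
    fun x y => SimpleGraph.fromRel_adj _ x y
  -- the map
  have hval : ∀ (g : V → ℕ) (hg : ∀ a, g a ∈ L a) (a : V),
      (⟨(e a, g a), by simpa [he] using hg a⟩ : TW L) ∈ ({w : TW L | g (e.symm w.1.1) = w.1.2} : Set (TW L)) := by
    intro g hg a
    show g (e.symm (e a)) = g a
    rw [Equiv.symm_apply_apply]
  let Φ : {g : V → ℕ // DPproper G L u v τ g} →
      {T : Set (TW L) // Cov.IsProperColoring T} := fun g => by
    refine ⟨{w : TW L | g.1 (e.symm w.1.1) = w.1.2}, ?_, ?_⟩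
    · intro a
      refine ⟨⟨(e a, g.1 a), by simpa [he] using g.2.1 a⟩, ⟨hval g.1 g.2.1 a, by
        exact (hmemL a _).2 rfl⟩, ?_⟩
      rintro w ⟨hwT, hwL⟩
      rw [hmemL] at hwL
      apply Subtype.ext
      refine Prod.ext hwL ?_
      simp only [Set.mem_setOf_eq] at hwT
      rw [hwL] at hwT
      simpa using hwT.symm
    · intro x y hx hy hadj
      simp only [Set.mem_setOf_eq] at hx hy
      rw [hadjH] at hadj
      rcases hadj.2 with ⟨a, b, hab, hxa, hyb, htw⟩ | ⟨a, b, hab, hya, hxb, htw⟩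
      · rw [hxa] at hx; rw [hyb] at hy
        simp only [Equiv.symm_apply_apply] at hx hy
        rw [← hx, ← hy] at htw
        exact g.2.2 hab htw
      · rw [hya] at hy; rw [hxb] at hx
        simp only [Equiv.symm_apply_apply] at hx hy
        rw [← hx, ← hy] at htw
        exact g.2.2 hab htw
  have hΦinj : Function.Injective Φ := by
    intro g g' h
    have h' : ({w : TW L | g.1 (e.symm w.1.1) = w.1.2} : Set (TW L)) =
        {w : TW L | g'.1 (e.symm w.1.1) = w.1.2} := congrArg Subtype.val h
    apply Subtype.ext; funext a
    have hm := hval g.1 g.2.1 a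
    rw [h'] at hm
    have hm2 : g'.1 (e.symm (e a)) = g.1 a := hm
    simpa using hm2.symm
  have hΦsurj : Function.Surjective Φ := by
    rintro ⟨T, hT⟩
    choose w hw hu using hT.1
    have hwfst : ∀ a, (w a).1.1 = e a := fun a => (hw a).2
    set g : V → ℕ := fun a => (w a).1.2 with hg
    have hgL : ∀ a, g a ∈ L a := by
      intro a
      have h5 := (w a).2
      rw [hwfst a] at h5
      simpa [he] using h5
    have hgDP : DPproper G L u v τ g := by
      refine ⟨hgL, ?_⟩
      intro a b hab htw
      have hne : w a ≠ w b := by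
        intro hcontra
        have : (e a : Fin (Fintype.card V)) = e b := by
          rw [← hwfst a, ← hwfst b, hcontra]
        exact hab.ne (e.injective this)
      have hAdj : Cov.H.Adj (w a) (w b) := by
        rw [hadjH]
        exact ⟨hne, Or.inl ⟨a, b, hab, hwfst a, hwfst b, htw⟩⟩
      exact hT.2 (hw a).1 (hw b).1 hAdj
    refine ⟨⟨g, hgDP⟩, ?_⟩
    apply Subtype.ext
    show ({w : TW L | g (e.symm w.1.1) = w.1.2} : Set (TW L)) = T
    ext z
    simp only [Set.mem_setOf_eq]
    constructor
    · intro hz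
      set a := e.symm z.1.1 with ha
      have : w a = z := by
        apply Subtype.ext
        refine Prod.ext ?_ hz
        rw [hwfst a, ha]
        simp
      rw [← this]
      exact (hw a).1
    · intro hz
      set a := e.symm z.1.1 with ha
      have hzL : z ∈ Cov.L a := by
        rw [hmemL, ha]; simp
      have h7 : z = w a := hu a z ⟨hz, hzL⟩
      show g a = z.1.2
      rw [h7]
  exact Nat.card_congr (Equiv.ofBijective Φ ⟨hΦinj, hΦsurj⟩)

end TwistAux

theorem PList_ge_PDP_add {V : Type*} [Fintype V] (G : SimpleGraph V) (m : ℕ)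
    (L : V → Finset ℕ) (hL : ∀ v, (L v).card = m) (u v : V) (huv : G.Adj u v)
    (d : ℕ) (hd : (L u \ L v).card = d) (hd1 : 1 ≤ d) (C : ℕ)
    (hC : ∀ x ∈ L u, ∀ y ∈ L v, x ≠ y →
      C ≤ Nat.card {f : V → ℕ // ProperLColoring G L f ∧ f u = x ∧ f v = y}) :
    PDP G m + C * d ≤ PList G L := by
  classical
  have huvne : u ≠ v := huv.ne
  -- cardinality of the reverse difference
  have hcard2 : (L v \ L u).card = d := by
    have h1 := Finset.card_sdiff_add_card_inter (L u) (L v)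
    have h2 := Finset.card_sdiff_add_card_inter (L v) (L u)
    rw [Finset.inter_comm] at h2
    rw [hL u] at h1
    rw [hL v] at h2
    omega
  -- the twist bijection on colors
  set σ : {c // c ∈ L u \ L v} ≃ {c // c ∈ L v \ L u} :=
    Finset.equivOfCardEq (by rw [hd, hcard2]) with hσ
  set τ : ℕ → ℕ := fun c => if h : c ∈ L u \ L v then (σ ⟨c, h⟩ : ℕ) else c with hτ
  have hτsd : ∀ (c : ℕ) (h : c ∈ L u \ L v), τ c ∈ L v \ L u := by
    intro c h
    rw [hτ]; simp only [dif_pos h]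
    exact (σ ⟨c, h⟩).2
  have hτfix : ∀ c : ℕ, c ∉ L u \ L v → τ c = c := by
    intro c h; rw [hτ]; simp only [dif_neg h]
  have hτmem : ∀ c ∈ L u, τ c ∈ L v := by
    intro c hc
    by_cases h : c ∈ L u \ L v
    · exact (Finset.mem_sdiff.mp (hτsd c h)).1
    · rw [hτfix c h]
      rw [Finset.mem_sdiff] at h
      push_neg at h
      exact h hc
  have hτne : ∀ c ∈ L u \ L v, c ≠ τ c := by
    intro c hc heq
    have h1 := (Finset.mem_sdiff.mp (hτsd c hc)).1
    have h2 := (Finset.mem_sdiff.mp hc).2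
    rw [← heq] at h1
    exact h2 h1
  have hτinj : Set.InjOn τ (L u : Set ℕ) := by
    intro c1 h1 c2 h2 heq
    rw [Finset.mem_coe] at h1 h2
    by_cases m1 : c1 ∈ L u \ L v <;> by_cases m2 : c2 ∈ L u \ L v
    · have e1 : τ c1 = (σ ⟨c1, m1⟩ : ℕ) := by rw [hτ]; simp only [dif_pos m1]
      have e2 : τ c2 = (σ ⟨c2, m2⟩ : ℕ) := by rw [hτ]; simp only [dif_pos m2]
      rw [e1, e2] at heq
      have := σ.injective (Subtype.ext heq)
      exact congrArg Subtype.val this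
    · exfalso
      have h3 := (Finset.mem_sdiff.mp (hτsd c1 m1)).2
      rw [heq, hτfix c2 m2] at h3
      exact h3 h2
    · exfalso
      have h3 := (Finset.mem_sdiff.mp (hτsd c2 m2)).2
      rw [← heq, hτfix c1 m1] at h3
      exact h3 h1
    · rw [hτfix c1 m1, hτfix c2 m2] at heq
      exact heq
  -- DP-proper implies list-proper
  have dp_to_proper : ∀ g, DPproper G L u v τ g → ProperLColoring G L g := by
    intro g hg
    refine ⟨hg.1, ?_⟩
    intro a b hab heq
    apply hg.2 hab
    by_cases h1 : a = u ∧ b = v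
    · refine Or.inl ⟨h1.1, h1.2, ?_⟩
      have hnm : g a ∉ L u \ L v := by
        rw [Finset.mem_sdiff]
        push_neg
        intro _
        rw [heq, ← h1.2]
        exact hg.1 b
      rw [← heq, hτfix _ hnm]
    · by_cases h2 : a = v ∧ b = u
      · refine Or.inr (Or.inl ⟨h2.1, h2.2, ?_⟩)
        have hnm : g b ∉ L u \ L v := by
          rw [Finset.mem_sdiff]
          push_neg
          intro _
          rw [← heq, ← h2.1]
          exact hg.1 a
        rw [hτfix _ hnm]
        exact heq
      · exact Or.inr (Or.inr ⟨h1, h2, heq⟩)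
  -- list-proper avoiding the twist implies DP-proper
  have proper_to_dp : ∀ f, ProperLColoring G L f → f v ≠ τ (f u) → DPproper G L u v τ f := by
    intro f hf hne
    refine ⟨hf.1, ?_⟩
    intro a b hab htw
    rcases htw with ⟨h1, h2, h3⟩ | ⟨h1, h2, h3⟩ | ⟨h1, h2, h3⟩
    · subst h1; subst h2; exact hne h3
    · subst h1; subst h2; exact hne h3
    · exact hf.2 hab h3
  -- finiteness
  haveI F1 : Finite {g : V → ℕ // DPproper G L u v τ g} :=
    finite_aux L _ (fun f h => h.1)
  haveI F2 : Finite {f : V → ℕ // ProperLColoring G L f ∧ f v = τ (f u)} :=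
    finite_aux L _ (fun f h => h.1.1)
  haveI F3 : Finite {f : V → ℕ // ProperLColoring G L f} :=
    finite_aux L _ (fun f h => h.1)
  -- the splitting bijection
  set Ψ : {g : V → ℕ // DPproper G L u v τ g} ⊕
      {f : V → ℕ // ProperLColoring G L f ∧ f v = τ (f u)} →
      {f : V → ℕ // ProperLColoring G L f} :=
    Sum.elim (fun g => ⟨g.1, dp_to_proper g.1 g.2⟩) (fun f => ⟨f.1, f.2.1⟩) with hΨ
  have hΨbij : Function.Bijective Ψ := by
    constructor
    · intro s t h
      rcases s with g | f <;> rcases t with g' | f' <;>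
        simp only [hΨ, Sum.elim_inl, Sum.elim_inr, Subtype.mk.injEq] at h
      · exact congrArg Sum.inl (Subtype.ext h)
      · exfalso
        apply g.2.2 huv
        refine Or.inl ⟨rfl, rfl, ?_⟩
        rw [h]
        exact f'.2.2
      · exfalso
        apply g'.2.2 huv
        refine Or.inl ⟨rfl, rfl, ?_⟩
        rw [← h]
        exact f.2.2
      · exact congrArg Sum.inr (Subtype.ext h)
    · rintro ⟨f, hf⟩
      by_cases hb : f v = τ (f u)
      · exact ⟨Sum.inr ⟨f, hf, hb⟩, rfl⟩
      · exact ⟨Sum.inl ⟨f, proper_to_dp f hf hb⟩, rfl⟩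
  have key : PList G L = Nat.card {g : V → ℕ // DPproper G L u v τ g} +
      Nat.card {f : V → ℕ // ProperLColoring G L f ∧ f v = τ (f u)} := by
    show Nat.card {f : V → ℕ // ProperLColoring G L f} = _
    rw [← Nat.card_congr (Equiv.ofBijective Ψ hΨbij), Nat.card_sum]
  -- lower bound for the bad part
  have hbad : C * d ≤ Nat.card {f : V → ℕ // ProperLColoring G L f ∧ f v = τ (f u)} := by
    set fib : {c // c ∈ L u \ L v} → Type _ := fun x =>
      {f : V → ℕ // ProperLColoring G L f ∧ f u = x.1 ∧ f v = τ x.1} with hfib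
    haveI Ffib : ∀ x, Finite (fib x) := fun x => finite_aux L _ (fun f h => h.1.1)
    haveI : ∀ x, Fintype (fib x) := fun x => Fintype.ofFinite _
    set Θ : (Σ x, fib x) → {f : V → ℕ // ProperLColoring G L f ∧ f v = τ (f u)} :=
      fun p => ⟨p.2.1, p.2.2.1, by rw [p.2.2.2.1]; exact p.2.2.2.2⟩ with hΘ
    have hΘinj : Function.Injective Θ := by
      rintro ⟨x, f⟩ ⟨x', f'⟩ h
      simp only [hΘ, Subtype.mk.injEq] at h
      have hx : x = x' := Subtype.ext (by rw [← f.2.2.1, ← f'.2.2.1, h])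
      subst hx
      exact congrArg (Sigma.mk x) (Subtype.ext h)
    have h1 : C * d ≤ Nat.card (Σ x, fib x) := by
      rw [Nat.card_eq_fintype_card, Fintype.card_sigma]
      have h2 : ∀ x ∈ (Finset.univ : Finset {c // c ∈ L u \ L v}),
          C ≤ Fintype.card (fib x) := by
        intro x _
        rw [← Nat.card_eq_fintype_card]
        exact hC x.1 (Finset.mem_sdiff.mp x.2).1 (τ x.1)
          (hτmem x.1 (Finset.mem_sdiff.mp x.2).1) (hτne x.1 x.2)
      have h3 := Finset.card_nsmul_le_sum Finset.univ (fun x => Fintype.card (fib x)) C h2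
      rw [smul_eq_mul] at h3
      have h4 : (Finset.univ : Finset {c // c ∈ L u \ L v}).card = d := by
        rw [Finset.card_univ, Fintype.card_coe, hd]
      rw [h4] at h3
      rw [mul_comm]
      exact h3
    exact h1.trans (Nat.card_le_card_of_injective Θ hΘinj)
  -- the DP color function bound
  have hdp : PDP G m ≤ Nat.card {g : V → ℕ // DPproper G L u v τ g} := by
    have hmem : Nat.card {g : V → ℕ // DPproper G L u v τ g} ∈
        {n | ∃ (W : Type) (Cov : DPCover G W), (∀ a, Nat.card (Cov.L a) = m) ∧ n = PDPCount Cov} := by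
      refine ⟨TW L, twistCover G L u v τ huvne hτinj, ?_, ?_⟩
      · intro a
        rw [Nat.card_congr (twistListEquiv G L u v τ huvne hτinj a),
          Nat.card_eq_finsetCard, hL]
      · exact twist_bij G L u v τ huvne hτinj
    exact Nat.sInf_le hmem
  rw [key]
  exact Nat.add_le_add hdp hbad
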